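/- (Existence and uniqueness of the regularized fixed point.) Let δ > 0, let S be a K×K complex Hermitian positive semidefinite matrix, and let R_1, …, R_D be K×K complex Hermitian positive semidefinite matrices. Then there exists exactly one vector (e_1, …, e_D) ∈ [0,∞)^D satisfying e_d = (1/K)·Tr( R_d ( (1/K)·Σ_{s=1}^D R_s/(1+e_s) + S + δI )⁻¹ ) for all d = 1, …, D. -/

import Mathlib

set_option linter.unusedSectionVars false
open Matrix
open scoped ComplexOrder

variable {n : Type*} [Fintype n] [DecidableEq n]

open scoped MatrixOrder in
/-- Square root of a positive semidefinite matrix. -/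
noncomputable def Matrix.PosSemidef.sqrt {A : Matrix n n ℂ} (_ : A.PosSemidef) : Matrix n n ℂ :=
  CFC.sqrt A

open scoped MatrixOrder in
lemma Matrix.PosSemidef.posSemidef_sqrt {A : Matrix n n ℂ} (hA : A.PosSemidef) :
    hA.sqrt.PosSemidef :=
  Matrix.nonneg_iff_posSemidef.mp (CFC.sqrt_nonneg A)

open scoped MatrixOrder in
lemma Matrix.PosSemidef.sqrt_mul_self {A : Matrix n n ℂ} (hA : A.PosSemidef) :
    hA.sqrt * hA.sqrt = A :=
  CFC.sqrt_mul_sqrt_self A (Matrix.nonneg_iff_posSemidef.mpr hA)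

lemma Matrix.posSemidef_iff_eq_transpose_mul_self {A : Matrix n n ℂ} :
    A.PosSemidef ↔ ∃ B : Matrix n n ℂ, A = Bᴴ * B := by
  constructor
  · intro hA
    refine ⟨hA.sqrt, ?_⟩
    rw [hA.posSemidef_sqrt.1, hA.sqrt_mul_self]
  · rintro ⟨B, rfl⟩
    exact Matrix.posSemidef_conjTranspose_mul_self B

lemma Matrix.IsHermitian.star_mul_self_mul_eq_diagonal {A : Matrix n n ℂ} (hA : A.IsHermitian) :
    (star (hA.eigenvectorUnitary : Matrix n n ℂ)) * A * (hA.eigenvectorUnitary : Matrix n n ℂ)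
      = diagonal (fun i => (hA.eigenvalues i : ℂ)) := by
  have := hA.conjStarAlgAut_star_eigenvectorUnitary
  simpa [Unitary.conjStarAlgAut_apply, Function.comp_def] using this

lemma psd_smul_real {A : Matrix n n ℂ} (hA : A.PosSemidef) {c : ℝ} (hc : 0 ≤ c) :
    (((c : ℂ)) • A).PosSemidef := by
  refine .of_dotProduct_mulVec_nonneg ?_ ?_
  · show _ = _
    rw [conjTranspose_smul, hA.1]
    congr 1
    simp [Complex.star_def, Complex.conj_ofReal]
  · intro x
    rw [smul_mulVec, dotProduct_smul]
    exact smul_nonneg (Complex.zero_le_real.2 hc) (hA.dotProduct_mulVec_nonneg x)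

lemma psd_sum {ι : Type*} (s : Finset ι) (f : ι → Matrix n n ℂ)
    (hf : ∀ i ∈ s, (f i).PosSemidef) : (∑ i ∈ s, f i).PosSemidef := by
  classical
  induction s using Finset.induction with
  | empty => simpa using Matrix.PosSemidef.zero
  | insert _ _ h ih =>
    rw [Finset.sum_insert h]
    exact ((hf _ (Finset.mem_insert_self _ _)).add
      (ih fun i hi => hf i (Finset.mem_insert_of_mem hi)))

lemma diag_entry_eq {M : Matrix n n ℂ} (i : n) :
    M i i = dotProduct (star (Pi.single i 1)) (M *ᵥ Pi.single i 1) := by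
  rw [mulVec_single, ← Pi.single_star, star_one, single_dotProduct]
  simp

lemma psd_diag_nonneg {M : Matrix n n ℂ} (hM : M.PosSemidef) (i : n) : 0 ≤ M i i := by
  rw [diag_entry_eq (M := M)]; exact hM.dotProduct_mulVec_nonneg _

lemma psd_trace_nonneg {M : Matrix n n ℂ} (hM : M.PosSemidef) : 0 ≤ M.trace := by
  rw [Matrix.trace]
  exact Finset.sum_nonneg fun i _ => psd_diag_nonneg hM i

lemma trace_mul_psd_nonneg {A B : Matrix n n ℂ} (hA : A.PosSemidef) (hB : B.PosSemidef) :
    0 ≤ (A * B).trace := by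
  obtain ⟨C, rfl⟩ := posSemidef_iff_eq_transpose_mul_self.mp hA
  rw [← Matrix.trace_mul_cycle]
  exact psd_trace_nonneg (hB.mul_mul_conjTranspose_same C)

lemma pd_conj {M : Matrix n n ℂ} (hM : M.PosDef) {N : Matrix n n ℂ} (hN : IsUnit N.det) :
    (Nᴴ * M * N).PosDef := by
  refine .of_dotProduct_mulVec_pos ?_ ?_
  · exact isHermitian_conjTranspose_mul_mul N hM.1
  · intro x hx
    have hNx : N *ᵥ x ≠ 0 := by
      intro h
      apply hx
      have : N⁻¹ *ᵥ (N *ᵥ x) = x := by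
        rw [mulVec_mulVec, Matrix.nonsing_inv_mul _ hN, one_mulVec]
      rw [← this, h, mulVec_zero]
    simpa only [star_mulVec, dotProduct_mulVec, vecMul_vecMul] using hM.dotProduct_mulVec_pos hNx

lemma pd_of_psd_isUnit {M : Matrix n n ℂ} (hM : M.PosSemidef) (h : IsUnit M.det) : M.PosDef := by
  refine .of_dotProduct_mulVec_pos hM.1 fun x hx => ?_
  apply lt_of_le_of_ne (hM.dotProduct_mulVec_nonneg x)
  intro heq
  have h0 : M *ᵥ x = 0 := (hM.dotProduct_mulVec_zero_iff x).mp heq.symm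
  have hinj : Function.Injective M.mulVec :=
    Matrix.mulVec_injective_iff_isUnit.mpr ((Matrix.isUnit_iff_isUnit_det M).mpr h)
  exact hx (hinj (by simpa using h0))

lemma trace_mul_pd_pos {A B : Matrix n n ℂ} (hA : A.PosDef) (hB : B.PosSemidef)
    (hB0 : B ≠ 0) : 0 < (B * A).trace := by
  set Q := hB.sqrt with hQdef
  have hQH : Qᴴ = Q := hB.posSemidef_sqrt.1
  have hQ0 : Q ≠ 0 := by
    intro h
    apply hB0
    rw [← hB.sqrt_mul_self, ← hQdef, h, Matrix.mul_zero]
  have htr : (B * A).trace = (Qᴴ * A * Q).trace := by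
    rw [hQH, ← hB.sqrt_mul_self, ← hQdef, Matrix.mul_assoc, ← Matrix.trace_mul_cycle,
      ← Matrix.mul_assoc]
    rw [Matrix.mul_assoc A]
    exact Matrix.trace_mul_comm (Q * Q) A
  have hpsd : (Qᴴ * A * Q).PosSemidef := hA.posSemidef.conjTranspose_mul_mul_same Q
  obtain ⟨j, i, hji⟩ : ∃ j i, Q j i ≠ 0 := by
    by_contra hc
    push_neg at hc
    exact hQ0 (by ext j i; simpa using hc j i)
  have hv : Q *ᵥ Pi.single i 1 ≠ 0 := by
    intro h
    apply hji
    have := congrFun h j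
    rw [mulVec_single] at this
    simpa using this
  have hdi : 0 < (Qᴴ * A * Q) i i := by
    rw [diag_entry_eq (M := Qᴴ * A * Q)]
    simpa only [star_mulVec, dotProduct_mulVec, vecMul_vecMul] using
      hA.dotProduct_mulVec_pos hv
  rw [htr, Matrix.trace]
  exact Finset.sum_pos' (fun k _ => psd_diag_nonneg hpsd k) ⟨i, Finset.mem_univ i, hdi⟩

lemma core_inv_psd {E : Matrix n n ℂ} (hE : E.PosDef) (h1 : (E - 1).PosSemidef) :
    ((1 : Matrix n n ℂ) - E⁻¹).PosSemidef := by
  have hH := hE.isHermitian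
  set U : Matrix n n ℂ := (hH.eigenvectorUnitary : Matrix n n ℂ) with hUdef
  have hU1 : star U * U = 1 := Unitary.coe_star_mul_self _
  have hU2 : U * star U = 1 := Unitary.coe_mul_star_self _
  set lam : n → ℝ := hH.eigenvalues with hlam
  have hev : ∀ i, 0 < lam i := hE.eigenvalues_pos
  have hDdef : star U * E * U = diagonal (fun i => (lam i : ℂ)) := by
    have := hH.star_mul_self_mul_eq_diagonal
    convert this using 2
  have hspec : E = U * diagonal (fun i => (lam i : ℂ)) * star U := by
    rw [← hDdef, Matrix.mul_assoc, Matrix.mul_assoc, hU2, Matrix.mul_one, ← Matrix.mul_assoc,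
      hU2, Matrix.one_mul]
  -- eigenvalues ≥ 1
  have hdsub : star U * (E - 1) * U = diagonal (fun i => ((lam i : ℂ) - 1)) := by
    rw [Matrix.mul_sub, Matrix.sub_mul, Matrix.mul_one, hDdef, hU1, ← Matrix.diagonal_one,
      diagonal_sub]
  have hge : ∀ i, 1 ≤ lam i := by
    intro i
    have hpsd : (star U * (E - 1) * U).PosSemidef := by
      have := h1.conjTranspose_mul_mul_same (B := U)
      rwa [← Matrix.star_eq_conjTranspose] at this
    rw [hdsub] at hpsd
    have := (posSemidef_diagonal_iff.mp hpsd) i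
    have h' : ((lam i - 1 : ℝ) : ℂ) = (lam i : ℂ) - 1 := by push_cast; ring
    rw [← h', Complex.zero_le_real] at this
    linarith
  -- inverse formula
  have hinv : E⁻¹ = U * diagonal (fun i => ((lam i)⁻¹ : ℂ)) * star U := by
    apply Matrix.inv_eq_right_inv
    rw [hspec]
    calc U * diagonal (fun i => (lam i : ℂ)) * star U *
          (U * diagonal (fun i => ((lam i)⁻¹ : ℂ)) * star U)
        = U * diagonal (fun i => (lam i : ℂ)) * (star U * U) *
          diagonal (fun i => ((lam i)⁻¹ : ℂ)) * star U := by
          simp only [Matrix.mul_assoc]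
      _ = U * (diagonal (fun i => (lam i : ℂ)) * diagonal (fun i => ((lam i)⁻¹ : ℂ))) * star U := by
          rw [hU1, Matrix.mul_one]
          simp only [Matrix.mul_assoc]
      _ = 1 := by
          rw [diagonal_mul_diagonal]
          have : (fun i => (lam i : ℂ) * ((lam i)⁻¹ : ℂ)) = fun _ => (1 : ℂ) := by
            funext i
            exact mul_inv_cancel₀ (Complex.ofReal_ne_zero.mpr (hev i).ne')
          rw [this, Matrix.diagonal_one, Matrix.mul_one, hU2]
  have hfinal : (1 : Matrix n n ℂ) - E⁻¹
      = U * diagonal (fun i => ((1 - (lam i)⁻¹ : ℝ) : ℂ)) * star U := by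
    rw [hinv]
    have h1' : (1 : Matrix n n ℂ) = U * diagonal (fun _ => (1 : ℂ)) * star U := by
      rw [Matrix.diagonal_one, Matrix.mul_one, hU2]
    rw [h1', ← Matrix.sub_mul, ← Matrix.mul_sub, diagonal_sub]
    congr 2
    funext i
    push_cast
    ring
  rw [hfinal]
  have hdiagpsd : (diagonal (fun i => ((1 - (lam i)⁻¹ : ℝ) : ℂ))).PosSemidef := by
    apply PosSemidef.diagonal
    intro i
    show (0 : ℂ) ≤ ((1 - (lam i)⁻¹ : ℝ) : ℂ)
    rw [Complex.zero_le_real]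
    have h0 := hev i
    have h1i := hge i
    have : (lam i)⁻¹ ≤ 1 := by
      rw [inv_le_one_iff₀]; right; exact h1i
    linarith
  have := hdiagpsd.mul_mul_conjTranspose_same (B := U)
  rwa [← Matrix.star_eq_conjTranspose] at this

lemma pd_smul_real {A : Matrix n n ℂ} (hA : A.PosDef) {c : ℝ} (hc : 0 < c) :
    (((c : ℂ)) • A).PosDef := by
  refine .of_dotProduct_mulVec_pos ?_ ?_
  · show _ = _
    rw [conjTranspose_smul, hA.1]
    congr 1
    simp [Complex.star_def, Complex.conj_ofReal]
  · intro x hx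
    rw [smul_mulVec, dotProduct_smul, smul_eq_mul]
    exact mul_pos (Complex.zero_lt_real.2 hc) (hA.dotProduct_mulVec_pos hx)

lemma inv_antitone {A B : Matrix n n ℂ} (hA : A.PosDef) (hBA : (B - A).PosSemidef) :
    (A⁻¹ - B⁻¹).PosSemidef := by
  have hB : B.PosDef := by
    have h := hA.add_posSemidef hBA
    have he : A + (B - A) = B := by abel
    rwa [he] at h
  have hAdet : IsUnit A.det := isUnit_iff_ne_zero.2 (ne_of_gt hA.det_pos)
  have hBdet : IsUnit B.det := isUnit_iff_ne_zero.2 (ne_of_gt hB.det_pos)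
  set P := hA.posSemidef.sqrt with hPdef
  have hPH : Pᴴ = P := hA.posSemidef.posSemidef_sqrt.1
  have hPP : P * P = A := hA.posSemidef.sqrt_mul_self
  have hPdet : IsUnit P.det := by
    have : P.det * P.det = A.det := by rw [← Matrix.det_mul, hPP]
    exact isUnit_iff_ne_zero.2 fun h => (ne_of_gt hA.det_pos) (by rw [← this, h, mul_zero])
  set Q := P⁻¹ with hQdef
  have hQP : Q * P = 1 := Matrix.nonsing_inv_mul P hPdet
  have hPQ : P * Q = 1 := Matrix.mul_nonsing_inv P hPdet
  have hQdet : IsUnit Q.det := by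
    have : Q.det * P.det = 1 := by rw [← Matrix.det_mul, hQP, Matrix.det_one]
    exact IsUnit.of_mul_eq_one _ this
  have hQH : Qᴴ = Q := by rw [hQdef, Matrix.conjTranspose_nonsing_inv, hPH]
  have hQAQ : Q * A * Q = 1 := by
    rw [← hPP, ← Matrix.mul_assoc, Matrix.mul_assoc (Q * P), hPQ, Matrix.mul_one, hQP]
  set E := Q * B * Q with hEdef
  have hE : E.PosDef := by
    have := pd_conj hB (N := Q) hQdet
    rwa [hQH] at this
  have hE1 : (E - 1).PosSemidef := by
    have heq : E - 1 = Qᴴ * (B - A) * Q := by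
      rw [hQH, Matrix.mul_sub, Matrix.sub_mul, ← hEdef, hQAQ]
    rw [heq] at *
    exact hBA.conjTranspose_mul_mul_same Q
  have hcore := core_inv_psd hE hE1
  have hEinv : E⁻¹ = P * B⁻¹ * P := by
    rw [hEdef, Matrix.mul_inv_rev, Matrix.mul_inv_rev,
      Matrix.nonsing_inv_nonsing_inv P hPdet, ← Matrix.mul_assoc]
  have hfinal : A⁻¹ - B⁻¹ = Qᴴ * (1 - E⁻¹) * Q := by
    rw [hQH, Matrix.mul_sub, Matrix.sub_mul, Matrix.mul_one, hEinv]
    congr 1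
    · rw [hQdef, ← hPP, Matrix.mul_inv_rev]
    · rw [← Matrix.mul_assoc, ← Matrix.mul_assoc, hQP, Matrix.one_mul, Matrix.mul_assoc, hPQ,
        Matrix.mul_one]
  rw [hfinal]
  exact hcore.conjTranspose_mul_mul_same Q

lemma inv_sub_inv_shift_pd {A : Matrix n n ℂ} (hA : A.PosDef) {c : ℝ} (hc : 0 < c) :
    (A⁻¹ - (A + (c : ℂ) • 1)⁻¹).PosDef := by
  set B := A + (c : ℂ) • (1 : Matrix n n ℂ) with hBdef
  have hc1 : ((c : ℂ) • (1 : Matrix n n ℂ)).PosDef := pd_smul_real Matrix.PosDef.one hc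
  have hB : B.PosDef := hA.add hc1
  have hAdet : IsUnit A.det := isUnit_iff_ne_zero.2 (ne_of_gt hA.det_pos)
  have hBdet : IsUnit B.det := isUnit_iff_ne_zero.2 (ne_of_gt hB.det_pos)
  have hBA : (B * A).PosDef := by
    have h2 : B * A = A * A + (c : ℂ) • A := by
      rw [hBdef, Matrix.add_mul, smul_mul_assoc, Matrix.one_mul]
    have hAA : (A * A).PosDef := by
      have hpsd : (A * A).PosSemidef := by
        have := Matrix.posSemidef_conjTranspose_mul_self A
        rwa [hA.1] at this
      exact pd_of_psd_isUnit hpsd (by rw [Matrix.det_mul]; exact hAdet.mul hAdet)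
    rw [h2]
    exact hAA.add (pd_smul_real hA hc)
  have key : A⁻¹ - B⁻¹ = (c : ℂ) • (B * A)⁻¹ := by
    have h1 : A⁻¹ * (B - A) * B⁻¹ = A⁻¹ - B⁻¹ := by
      rw [Matrix.mul_sub, Matrix.sub_mul, Matrix.mul_assoc A⁻¹ B,
        Matrix.mul_nonsing_inv B hBdet, Matrix.mul_one, Matrix.nonsing_inv_mul A hAdet,
        Matrix.one_mul]
    have h2 : B - A = (c : ℂ) • (1 : Matrix n n ℂ) := by rw [hBdef]; abel
    rw [← h1, h2, Matrix.mul_inv_rev]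
    rw [mul_smul_comm, Matrix.mul_one, smul_mul_assoc]
  rw [key]
  exact pd_smul_real hBA.inv hc

section Main

variable {K D : ℕ} (δ : ℝ) (S : Matrix (Fin K) (Fin K) ℂ) (R : Fin D → Matrix (Fin K) (Fin K) ℂ)

/-- The matrix appearing in the fixed point equation. -/
noncomputable def Mmat (e : Fin D → ℝ) : Matrix (Fin K) (Fin K) ℂ :=
  (1 / (K : ℂ)) • ∑ s, (1 / (1 + (e s : ℂ))) • R s + S + (δ : ℂ) • 1

/-- The fixed point map. -/
noncomputable def Fmap (e : Fin D → ℝ) : Fin D → ℝ := fun d =>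
  ((1 / (K : ℂ)) * (R d * (Mmat δ S R e)⁻¹).trace).re

variable {δ S R}

lemma cast_one_div_K : (1 / (K : ℂ)) = ((1 / (K : ℝ) : ℝ) : ℂ) := by push_cast; ring

lemma one_div_K_nonneg : (0 : ℝ) ≤ 1 / (K : ℝ) := by positivity

lemma coeff_cast {x : ℝ} (hx : 0 ≤ x) :
    (1 / (1 + (x : ℂ))) = (((1 + x)⁻¹ : ℝ) : ℂ) := by push_cast; ring

lemma Mmat_sub_shift_psd (hS : S.PosSemidef) (hR : ∀ d, (R d).PosSemidef)
    {e : Fin D → ℝ} (he : ∀ d, 0 ≤ e d) :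
    (Mmat δ S R e - (δ : ℂ) • 1).PosSemidef := by
  have h1 : Mmat δ S R e - (δ : ℂ) • 1
      = (1 / (K : ℂ)) • ∑ s, (1 / (1 + (e s : ℂ))) • R s + S := by
    rw [Mmat]; abel
  rw [h1]
  apply PosSemidef.add _ hS
  rw [cast_one_div_K]
  apply psd_smul_real _ one_div_K_nonneg
  apply psd_sum
  intro s _
  rw [coeff_cast (he s)]
  have : (0:ℝ) < 1 + e s := by have := he s; linarith
  exact psd_smul_real (hR s) (by positivity)

lemma Mmat_pd (hδ : 0 < δ) (hS : S.PosSemidef) (hR : ∀ d, (R d).PosSemidef)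
    {e : Fin D → ℝ} (he : ∀ d, 0 ≤ e d) : (Mmat δ S R e).PosDef := by
  have h1 : ((δ : ℂ) • (1 : Matrix (Fin K) (Fin K) ℂ)).PosDef :=
    pd_smul_real Matrix.PosDef.one hδ
  have h2 := Matrix.PosDef.posSemidef_add (Mmat_sub_shift_psd (δ := δ) hS hR he) h1
  have h3 : Mmat δ S R e - (δ:ℂ) • 1 + (δ:ℂ) • 1 = Mmat δ S R e := by abel
  rwa [h3] at h2

lemma Mmat_sub (e e' : Fin D → ℝ) :
    Mmat δ S R e - Mmat δ S R e'
      = (1 / (K : ℂ)) • ∑ s, ((1 / (1 + (e s : ℂ))) - (1 / (1 + (e' s : ℂ)))) • R s := by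
  have h1 : Mmat δ S R e - Mmat δ S R e'
      = (1 / (K : ℂ)) • (∑ s, (1 / (1 + (e s : ℂ))) • R s
          - ∑ s, (1 / (1 + (e' s : ℂ))) • R s) := by
    rw [Mmat, Mmat, smul_sub]
    abel
  rw [h1, ← Finset.sum_sub_distrib]
  congr 1
  refine Finset.sum_congr rfl fun s _ => ?_
  rw [← sub_smul]

lemma Mmat_mono (hR : ∀ d, (R d).PosSemidef) {e e' : Fin D → ℝ}
    (he : ∀ d, 0 ≤ e d) (hee' : ∀ d, e d ≤ e' d) :
    (Mmat δ S R e - Mmat δ S R e').PosSemidef := by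
  rw [Mmat_sub, cast_one_div_K]
  apply psd_smul_real _ one_div_K_nonneg
  apply psd_sum
  intro s _
  have h1 : (0:ℝ) < 1 + e s := by have := he s; linarith
  have h2 : (0:ℝ) < 1 + e' s := by have := (he s).trans (hee' s); linarith
  have hc : (1 / (1 + ((e s : ℝ) : ℂ))) - (1 / (1 + ((e' s : ℝ) : ℂ)))
      = ((((1 + e s)⁻¹ - (1 + e' s)⁻¹ : ℝ)) : ℂ) := by push_cast; ring
  rw [hc]
  apply psd_smul_real (hR s)
  have : (1 + e' s)⁻¹ ≤ (1 + e s)⁻¹ := by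
    apply inv_anti₀ h1
    linarith [hee' s]
  linarith

lemma trace_re_mono {Rm X Y : Matrix (Fin K) (Fin K) ℂ} (hRm : Rm.PosSemidef)
    (hXY : (X - Y).PosSemidef) :
    ((1 / (K : ℂ)) * (Rm * Y).trace).re ≤ ((1 / (K : ℂ)) * (Rm * X).trace).re := by
  have h := trace_mul_psd_nonneg hRm hXY
  rw [Matrix.mul_sub, Matrix.trace_sub] at h
  rw [Complex.nonneg_iff] at h
  have hre : (Rm * Y).trace.re ≤ (Rm * X).trace.re := by
    have := h.1
    rw [Complex.sub_re] at this
    linarith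
  rw [cast_one_div_K, Complex.re_ofReal_mul, Complex.re_ofReal_mul]
  exact mul_le_mul_of_nonneg_left hre one_div_K_nonneg

lemma Fmap_nonneg (hδ : 0 < δ) (hS : S.PosSemidef) (hR : ∀ d, (R d).PosSemidef)
    {e : Fin D → ℝ} (he : ∀ d, 0 ≤ e d) (d : Fin D) :
    0 ≤ (1 / (K : ℂ)) * (R d * (Mmat δ S R e)⁻¹).trace := by
  apply mul_nonneg
  · rw [cast_one_div_K, ← Complex.ofReal_zero, Complex.real_le_real]
    exact one_div_K_nonneg
  · exact trace_mul_psd_nonneg (hR d) (Mmat_pd hδ hS hR he).inv.posSemidef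

lemma real_of_nonneg {z : ℂ} (h : 0 ≤ z) : ((z.re : ℝ) : ℂ) = z := by
  rw [Complex.nonneg_iff] at h
  exact Complex.ext (by simp) (by simp [← h.2])

lemma Fmap_eq (hδ : 0 < δ) (hS : S.PosSemidef) (hR : ∀ d, (R d).PosSemidef)
    {e : Fin D → ℝ} (he : ∀ d, 0 ≤ e d) (d : Fin D) :
    ((Fmap δ S R e d : ℝ) : ℂ) = (1 / (K : ℂ)) * (R d * (Mmat δ S R e)⁻¹).trace :=
  real_of_nonneg (Fmap_nonneg hδ hS hR he d)

lemma Fmap_nonneg' (hδ : 0 < δ) (hS : S.PosSemidef) (hR : ∀ d, (R d).PosSemidef)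
    {e : Fin D → ℝ} (he : ∀ d, 0 ≤ e d) (d : Fin D) : 0 ≤ Fmap δ S R e d :=
  ((Complex.nonneg_iff).mp (Fmap_nonneg hδ hS hR he d)).1

lemma Fmap_mono (hδ : 0 < δ) (hS : S.PosSemidef) (hR : ∀ d, (R d).PosSemidef)
    {e e' : Fin D → ℝ} (he : ∀ d, 0 ≤ e d) (hee' : ∀ d, e d ≤ e' d) (d : Fin D) :
    Fmap δ S R e d ≤ Fmap δ S R e' d := by
  have he' : ∀ d, 0 ≤ e' d := fun d => (he d).trans (hee' d)
  apply trace_re_mono (hR d)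
  exact inv_antitone (Mmat_pd hδ hS hR he') (Mmat_mono hR he hee')

/-- Upper bound for the fixed point map. -/
noncomputable def Cbd (δ : ℝ) (R : Fin D → Matrix (Fin K) (Fin K) ℂ) : Fin D → ℝ := fun d =>
  ((1 / (K : ℂ)) * (R d * ((δ⁻¹ : ℝ) : ℂ) • (1 : Matrix (Fin K) (Fin K) ℂ)).trace).re

lemma Fmap_le_Cbd (hδ : 0 < δ) (hS : S.PosSemidef) (hR : ∀ d, (R d).PosSemidef)
    {e : Fin D → ℝ} (he : ∀ d, 0 ≤ e d) (d : Fin D) :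
    Fmap δ S R e d ≤ Cbd δ R d := by
  apply trace_re_mono (hR d)
  have hd1 : ((δ : ℂ) • (1 : Matrix (Fin K) (Fin K) ℂ)).PosDef :=
    pd_smul_real Matrix.PosDef.one hδ
  have hinv : ((δ : ℂ) • (1 : Matrix (Fin K) (Fin K) ℂ))⁻¹
      = ((δ⁻¹ : ℝ) : ℂ) • (1 : Matrix (Fin K) (Fin K) ℂ) := by
    apply Matrix.inv_eq_right_inv
    rw [smul_mul_smul_comm, Matrix.one_mul, ← Complex.ofReal_mul,
      mul_inv_cancel₀ hδ.ne', Complex.ofReal_one, one_smul]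
  rw [← hinv]
  exact inv_antitone hd1 (Mmat_sub_shift_psd hS hR he)

lemma Mmat_continuousAt {e : Fin D → ℝ} (he : ∀ d, 0 ≤ e d) :
    ContinuousAt (fun v : Fin D → ℝ => Mmat δ S R v) e := by
  have hsum : ContinuousAt (fun v : Fin D → ℝ =>
      ∑ s, (1 / (1 + ((v s : ℝ) : ℂ))) • R s) e := by
    apply tendsto_finset_sum
    intro s _
    have h1 : ContinuousAt (fun v : Fin D → ℝ => ((v s : ℝ) : ℂ)) e :=
      Complex.continuous_ofReal.continuousAt.comp (continuous_apply s).continuousAt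
    have h2 : ContinuousAt (fun v : Fin D → ℝ => 1 + ((v s : ℝ) : ℂ)) e :=
      continuousAt_const.add h1
    have hne : (1 : ℂ) + ((e s : ℝ) : ℂ) ≠ 0 := by
      have hpos : (0:ℝ) < 1 + e s := by have := he s; linarith
      have hc : (1 : ℂ) + ((e s : ℝ) : ℂ) = ((1 + e s : ℝ) : ℂ) := by push_cast; ring
      rw [hc]
      exact_mod_cast ne_of_gt hpos
    have h3 : ContinuousAt (fun v : Fin D → ℝ => (1 + ((v s : ℝ) : ℂ))⁻¹) e := h2.inv₀ hne
    have h4 : ContinuousAt (fun v : Fin D → ℝ => (1 / (1 + ((v s : ℝ) : ℂ)))) e := by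
      simpa only [one_div] using h3
    exact h4.smul continuousAt_const
  exact ((hsum.const_smul (1 / (K : ℂ))).add continuousAt_const).add continuousAt_const

lemma Fmap_continuousAt (hδ : 0 < δ) (hS : S.PosSemidef) (hR : ∀ d, (R d).PosSemidef)
    {e : Fin D → ℝ} (he : ∀ d, 0 ≤ e d) (d : Fin D) :
    ContinuousAt (fun v : Fin D → ℝ => Fmap δ S R v d) e := by
  have hM := Mmat_continuousAt (δ := δ) (S := S) (R := R) he
  have hinv : ContinuousAt Inv.inv (Mmat δ S R e) := by
    apply continuousAt_matrix_inv
    rw [Ring.inverse_eq_inv']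
    exact continuousAt_inv₀ (ne_of_gt (Mmat_pd hδ hS hR he).det_pos)
  have h2 : ContinuousAt (fun v : Fin D → ℝ => (Mmat δ S R v)⁻¹) e := hinv.comp hM
  have h3 : Continuous (fun X : Matrix (Fin K) (Fin K) ℂ => (R d * X).trace) :=
    (continuous_const.matrix_mul continuous_id).matrix_trace
  have h4 : ContinuousAt (fun v : Fin D → ℝ => (R d * (Mmat δ S R v)⁻¹).trace) e :=
    h3.continuousAt.comp h2
  exact Complex.continuous_re.continuousAt.comp (h4.const_mul (1 / (K : ℂ)))

lemma exists_fixed (hδ : 0 < δ) (hS : S.PosSemidef) (hR : ∀ d, (R d).PosSemidef) :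
    ∃ e : Fin D → ℝ, (∀ d, 0 ≤ e d) ∧ ∀ d, e d = Fmap δ S R e d := by
  set F := Fmap δ S R with hF
  set u : ℕ → (Fin D → ℝ) := fun n => F^[n] 0 with hu
  have hstep : ∀ n, u (n + 1) = F (u n) := fun n => Function.iterate_succ_apply' F n 0
  have hu0 : u 0 = 0 := rfl
  have hnn : ∀ n d, 0 ≤ u n d := by
    intro n
    induction n with
    | zero => intro d; rw [hu0]; exact le_refl 0
    | succ n ih => rw [hstep]; exact fun d => Fmap_nonneg' hδ hS hR ih d
  have hmono : ∀ n d, u n d ≤ u (n + 1) d := by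
    intro n
    induction n with
    | zero =>
      intro d
      rw [hstep, hu0]
      exact Fmap_nonneg' hδ hS hR (fun d => le_refl 0) d
    | succ n ih =>
      intro d
      have ih' : ∀ d, u n d ≤ F (u n) d := by rw [← hstep n]; exact ih
      have hfin := Fmap_mono hδ hS hR (hnn n) ih' d
      rw [hstep (n + 1), hstep n]
      exact hfin
  have hmono' : ∀ d, Monotone fun n => u n d :=
    fun d => monotone_nat_of_le_succ (fun n => hmono n d)
  have hbdd : ∀ n d, u n d ≤ Cbd δ R d := by
    intro n d
    cases n with
    | zero =>
      rw [hu0]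
      exact le_trans (Fmap_nonneg' hδ hS hR (fun _ => le_refl 0) d)
        (Fmap_le_Cbd hδ hS hR (fun _ => le_refl 0) d)
    | succ n =>
      rw [hstep]
      exact Fmap_le_Cbd hδ hS hR (hnn n) d
  set e : Fin D → ℝ := fun d => ⨆ n, u n d with he
  have hconv : ∀ d, Filter.Tendsto (fun n => u n d) Filter.atTop (nhds (e d)) := by
    intro d
    exact tendsto_atTop_ciSup (hmono' d)
      ⟨Cbd δ R d, by rintro x ⟨n, rfl⟩; exact hbdd n d⟩
  have hen : ∀ d, 0 ≤ e d := by
    intro d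
    refine le_trans (hnn 0 d) ?_
    exact le_ciSup ⟨Cbd δ R d, by rintro x ⟨n, rfl⟩; exact hbdd n d⟩ 0
  have htend : Filter.Tendsto u Filter.atTop (nhds e) := tendsto_pi_nhds.mpr hconv
  refine ⟨e, hen, fun d => ?_⟩
  have h1 : Filter.Tendsto (fun n => F (u n) d) Filter.atTop (nhds (F e d)) :=
    ((Fmap_continuousAt hδ hS hR hen d).tendsto).comp htend
  have h2 : Filter.Tendsto (fun n => u (n + 1) d) Filter.atTop (nhds (e d)) :=
    (hconv d).comp (Filter.tendsto_add_atTop_nat 1)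
  have h3 : (fun n => u (n + 1) d) = fun n => F (u n) d :=
    funext fun n => by rw [hstep]
  rw [h3] at h2
  exact tendsto_nhds_unique h2 h1

lemma fixed_le (hδ : 0 < δ) (hS : S.PosSemidef) (hR : ∀ d, (R d).PosSemidef)
    {e e' : Fin D → ℝ} (he : ∀ d, 0 ≤ e d) (he' : ∀ d, 0 ≤ e' d)
    (hfe : ∀ d, e d = Fmap δ S R e d) (hfe' : ∀ d, e' d = Fmap δ S R e' d) :
    ∀ d, e' d ≤ e d := by
  by_contra hcon
  push_neg at hcon
  obtain ⟨d₀, hd₀⟩ := hcon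
  have hpos : ∀ d, (0:ℝ) < 1 + e d := fun d => by have := he d; linarith
  have hpos' : ∀ d, (0:ℝ) < 1 + e' d := fun d => by have := he' d; linarith
  obtain ⟨dm, -, hdm⟩ := Finset.exists_max_image Finset.univ
    (fun d => (1 + e' d) / (1 + e d)) ⟨d₀, Finset.mem_univ d₀⟩
  set α : ℝ := (1 + e' dm) / (1 + e dm) with hαdef
  have hα1 : 1 < α := by
    have h1 : 1 < (1 + e' d₀) / (1 + e d₀) := (one_lt_div (hpos d₀)).mpr (by linarith)
    exact lt_of_lt_of_le h1 (hdm d₀ (Finset.mem_univ d₀))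
  have hαpos : (0:ℝ) < α := lt_trans one_pos hα1
  have hkey : ∀ s, 1 + e' s ≤ α * (1 + e s) := by
    intro s
    exact (div_le_iff₀ (hpos s)).mp (hdm s (Finset.mem_univ s))
  have heq : 1 + e' dm = α * (1 + e dm) := by
    rw [hαdef, div_mul_cancel₀ _ (hpos dm).ne']
  have hinv1 : α⁻¹ < 1 := by
    have h0 : 0 < α⁻¹ := by positivity
    nlinarith [inv_mul_cancel₀ hαpos.ne']
  have hinvpos : (0:ℝ) < α⁻¹ := by positivity
  set c : ℝ := δ * (1 - α⁻¹) with hcdef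
  have hcpos : 0 < c := mul_pos hδ (by linarith)
  set A : Matrix (Fin K) (Fin K) ℂ := ((α⁻¹ : ℝ) : ℂ) • Mmat δ S R e with hAdef
  have hMe := Mmat_pd hδ hS hR he
  have hApd : A.PosDef := pd_smul_real hMe hinvpos
  have hsplit : ∑ s, ((1 / (1 + (e' s : ℂ))) - ((α⁻¹:ℝ):ℂ) * (1 / (1 + (e s : ℂ)))) • R s
      = (∑ s, (1 / (1 + (e' s : ℂ))) • R s)
        - ((α⁻¹:ℝ):ℂ) • ∑ s, (1 / (1 + (e s : ℂ))) • R s := by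
    rw [Finset.smul_sum, ← Finset.sum_sub_distrib]
    refine Finset.sum_congr rfl fun s _ => ?_
    rw [sub_smul, smul_smul]
  have hcl1 : (Mmat δ S R e' - (A + ((c:ℝ):ℂ) • 1)).PosSemidef := by
    have hexp : Mmat δ S R e' - (A + ((c:ℝ):ℂ) • 1)
        = (1 / (K : ℂ)) • ∑ s, ((1 / (1 + (e' s : ℂ)))
              - ((α⁻¹:ℝ):ℂ) * (1 / (1 + (e s : ℂ)))) • R s
          + (((1 - α⁻¹ : ℝ)) : ℂ) • S := by
      rw [hsplit, hAdef, Mmat, Mmat, hcdef]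
      push_cast
      module
    rw [hexp]
    apply PosSemidef.add
    · rw [cast_one_div_K]
      apply psd_smul_real _ one_div_K_nonneg
      apply psd_sum
      intro s _
      have hcast : (1 / (1 + ((e' s : ℝ) : ℂ))) - ((α⁻¹:ℝ):ℂ) * (1 / (1 + ((e s : ℝ) : ℂ)))
          = (((1 + e' s)⁻¹ - α⁻¹ * (1 + e s)⁻¹ : ℝ) : ℂ) := by push_cast; ring
      rw [hcast]
      apply psd_smul_real (hR s)
      have h4 : (α * (1 + e s))⁻¹ ≤ (1 + e' s)⁻¹ := inv_anti₀ (hpos' s) (hkey s)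
      rw [mul_inv] at h4
      linarith
    · exact psd_smul_real hS (by linarith)
  have hApc : (A + ((c:ℝ):ℂ) • 1).PosDef :=
    hApd.add (pd_smul_real Matrix.PosDef.one hcpos)
  have hle1 : ((A + ((c:ℝ):ℂ) • 1)⁻¹ - (Mmat δ S R e')⁻¹).PosSemidef :=
    inv_antitone hApc hcl1
  have hpd2 : (A⁻¹ - (A + ((c:ℝ):ℂ) • 1)⁻¹).PosDef := inv_sub_inv_shift_pd hApd hcpos
  have hAinv : A⁻¹ = ((α : ℝ) : ℂ) • (Mmat δ S R e)⁻¹ := by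
    apply Matrix.inv_eq_right_inv
    rw [hAdef, smul_mul_smul_comm, ← Complex.ofReal_mul, inv_mul_cancel₀ hαpos.ne',
      Matrix.mul_nonsing_inv _ (isUnit_iff_ne_zero.2 (ne_of_gt hMe.det_pos)),
      Complex.ofReal_one, one_smul]
  by_cases hR0 : R dm = 0
  · have h1 : e dm = 0 := by rw [hfe dm]; simp [Fmap, hR0]
    have h2 : e' dm = 0 := by rw [hfe' dm]; simp [Fmap, hR0]
    rw [h1, h2] at heq
    simp only [add_zero, mul_one] at heq
    linarith
  · have hKne : K ≠ 0 := by
      intro hk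
      subst hk
      exact hR0 (Subsingleton.elim _ _)
    have hKpos : (0:ℝ) < 1 / (K:ℝ) := by
      have : (0:ℝ) < (K:ℝ) := by exact_mod_cast Nat.pos_of_ne_zero hKne
      positivity
    have step1 : e' dm ≤ ((1 / (K : ℂ)) * (R dm * (A + ((c:ℝ):ℂ) • 1)⁻¹).trace).re := by
      rw [hfe' dm]
      exact trace_re_mono (hR dm) hle1
    have step2 : ((1 / (K : ℂ)) * (R dm * (A + ((c:ℝ):ℂ) • 1)⁻¹).trace).re
        < ((1 / (K : ℂ)) * (R dm * A⁻¹).trace).re := by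
      have ht := trace_mul_pd_pos hpd2 (hR dm) hR0
      rw [Matrix.mul_sub, Matrix.trace_sub] at ht
      rw [Complex.lt_def] at ht
      have h5 : (R dm * (A + ((c:ℝ):ℂ) • 1)⁻¹).trace.re < (R dm * A⁻¹).trace.re := by
        have h6 := ht.1
        rw [Complex.sub_re, Complex.zero_re] at h6
        linarith
      rw [cast_one_div_K, Complex.re_ofReal_mul, Complex.re_ofReal_mul]
      exact mul_lt_mul_of_pos_left h5 hKpos
    have step3 : ((1 / (K : ℂ)) * (R dm * A⁻¹).trace).re = α * e dm := by
      rw [hAinv, mul_smul_comm, Matrix.trace_smul, smul_eq_mul, mul_left_comm,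
        Complex.re_ofReal_mul, hfe dm]
      rfl
    have hlt : e' dm < α * e dm := lt_of_le_of_lt step1 (step2.trans_eq step3)
    have hfin : α * (1 + e dm) < 1 + α * e dm := by rw [← heq]; linarith
    rw [mul_add, mul_one] at hfin
    linarith

end Main

/-- **Existence and uniqueness of the regularized fixed point.**
Let `δ > 0`, `S` a `K × K` Hermitian positive semidefinite matrix, and
`R_1, …, R_D` `K × K` Hermitian positive semidefinite matrices.  Then there is
exactly one vector `(e_1, …, e_D) ∈ [0,∞)^D` with
`e_d = (1/K)·Tr(R_d ((1/K)·Σ_s R_s/(1+e_s) + S + δI)⁻¹)` for all `d`. -/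
theorem fixed_point_exists_unique {K D : ℕ} (δ : ℝ) (hδ : 0 < δ)
    (S : Matrix (Fin K) (Fin K) ℂ) (hS : S.PosSemidef)
    (R : Fin D → Matrix (Fin K) (Fin K) ℂ) (hR : ∀ d, (R d).PosSemidef) :
    ∃! e : Fin D → ℝ, (∀ d, 0 ≤ e d) ∧ ∀ d,
      ((e d : ℝ) : ℂ) = (1 / (K : ℂ)) * Matrix.trace (R d *
        ((1 / (K : ℂ)) • ∑ s, (1 / (1 + (e s : ℂ))) • R s + S + (δ : ℂ) • 1)⁻¹) := by
  obtain ⟨e, hnn, hfix⟩ := exists_fixed hδ hS hR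
  refine ⟨e, ⟨hnn, fun d => ?_⟩, ?_⟩
  · have h := Fmap_eq hδ hS hR hnn d
    rw [Mmat] at h
    rw [hfix d]
    exact h
  · rintro e' ⟨hnn', hfix'⟩
    have hfixR : ∀ d, e' d = Fmap δ S R e' d := by
      intro d
      have h := congrArg Complex.re (hfix' d)
      rw [Complex.ofReal_re] at h
      rw [h]
      simp only [Fmap, Mmat]
    have h1 := fixed_le hδ hS hR hnn hnn' hfix hfixR
    have h2 := fixed_le hδ hS hR hnn' hnn hfixR hfix
    exact funext fun d => le_antisymm (h1 d) (h2 d)
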